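/- The lazy potential satisfies the 3-competitiveness update condition for a cryptic move of HARMONIC with two servers: let (M,d) be a metric space and let x, y, z, r ∈ M be pairwise distinct. Then Φ(x,y,z) + 3·d(y,r) − Φ(x,r,z) ≥ 0, where Φ(u,v,w) := 2·d(u,v)·(2·d(u,w)+d(v,w))/(d(u,v)+d(u,w)+d(v,w)). -/
import Mathlib

private lemma lazyPhi_key (a b c p q t : ℝ) (ha : 0 ≤ a) (hb : 0 ≤ b) (hc : 0 ≤ c)
    (hp : 0 ≤ p) (hq : 0 ≤ q) (ht : 0 ≤ t)
    (t5 : p ≤ a + t) (t7 : b ≤ p + q) (t10 : c ≤ t + q)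
    (t2 : b ≤ a + c) (t12 : q ≤ c + t) :
    (2*a*(2*b+c) + 3*t*(a+b+c))*(p+b+q) - 2*p*(2*b+q)*(a+b+c) ≥ 0 := by
  have e1 : 0 ≤ a + t - p := by linarith
  have e2 : 0 ≤ c + t - q := by linarith
  have e7 : 0 ≤ a + c - b := by linarith
  have e8 : 0 ≤ p + q - b := by linarith
  have e12 : 0 ≤ q + t - c := by linarith
  have hS : (2*a*(2*b+c) + 3*t*(a+b+c))*(p+b+q) - 2*p*(2*b+q)*(a+b+c)
      = b*t*(a+c-b) + 2*(c*p*t) + 2*(c*q*(a+t-p)) + b*p*(q+t-c) + 2*(b*p*t)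
        + 3*(b*q*(a+t-p)) + a*b*(q+t-c) + c*t*(p+q-b) + 4*(b*b*(a+t-p))
        + 3*(a*q*t) + a*p*t + 2*(a*p*(c+t-q)) + a*b*t + 3*(b*c*(a+t-p)) := by
    ring
  rw [hS]
  positivity

/-- The lazy potential for HARMONIC with two servers:
`Φ(u,v,w) = 2·d(u,v)·(2·d(u,w) + d(v,w)) / (d(u,v) + d(u,w) + d(v,w))`. -/
noncomputable def lazyPhi {M : Type*} [MetricSpace M] (u v w : M) : ℝ :=
  2 * dist u v * (2 * dist u w + dist v w) / (dist u v + dist u w + dist v w)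

/-- Update condition of the lazy potential for a cryptic move of HARMONIC with
two servers: the algorithm's servers are at `x, z`, the adversary's at `y, z`;
the adversary relocates its open server from `y` to `r` without a request. -/
theorem lazyPhi_cryptic_move {M : Type*} [MetricSpace M] (x y z r : M)
    (hxy : x ≠ y) (hxz : x ≠ z) (hxr : x ≠ r)
    (hyz : y ≠ z) (hyr : y ≠ r) (hzr : z ≠ r) :
    lazyPhi x y z + 3 * dist y r - lazyPhi x r z ≥ 0 := by
  have ha : 0 < dist x y := dist_pos.2 hxy
  have hb : 0 < dist x z := dist_pos.2 hxz
  have hc : 0 < dist y z := dist_pos.2 hyz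
  have hp : 0 < dist x r := dist_pos.2 hxr
  have hq : 0 < dist z r := dist_pos.2 hzr
  have ht : 0 < dist y r := dist_pos.2 hyr
  have t5 : dist x r ≤ dist x y + dist y r := dist_triangle x y r
  have t7 : dist x z ≤ dist x r + dist z r := by
    have := dist_triangle x r z; rwa [dist_comm r z] at this
  have t10 : dist y z ≤ dist y r + dist z r := by
    have := dist_triangle y r z; rwa [dist_comm r z] at this
  have t2 : dist x z ≤ dist x y + dist y z := dist_triangle x y z
  have t12 : dist z r ≤ dist y z + dist y r := by
    have := dist_triangle z y r; rwa [dist_comm z y] at this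
  have key := lazyPhi_key (dist x y) (dist x z) (dist y z) (dist x r) (dist z r) (dist y r)
    ha.le hb.le hc.le hp.le hq.le ht.le t5 t7 t10 t2 t12
  have hs1 : 0 < dist x y + dist x z + dist y z := by linarith
  have hs2 : 0 < dist x r + dist x z + dist z r := by linarith
  unfold lazyPhi
  rw [dist_comm r z]
  rw [ge_iff_le, ← sub_nonneg] at *
  have heq : 2 * dist x y * (2 * dist x z + dist y z) / (dist x y + dist x z + dist y z)
      + 3 * dist y r
      - 2 * dist x r * (2 * dist x z + dist z r) / (dist x r + dist x z + dist z r) - 0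
      = ((2*dist x y*(2*dist x z + dist y z) + 3*dist y r*(dist x y + dist x z + dist y z))
          * (dist x r + dist x z + dist z r)
        - 2*dist x r*(2*dist x z + dist z r)*(dist x y + dist x z + dist y z))
        / ((dist x y + dist x z + dist y z) * (dist x r + dist x z + dist z r)) := by
    field_simp
    ring
  rw [heq]
  exact div_nonneg (by linarith) (by positivity)
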